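/- Let q be a prime power and k ≥ 3. The set of Bluher values in F_{q^k} (i.e., the set of B ∈ F_{q^k}^× such that X^{q+1} - B·X + B splits completely over F_{q^k}) equals the set { (u - u^{q^2})^{q+1} / (u - u^q)^{q^2+1} : u ∈ F_{q^k} \ F_{q^2} }. -/

import Mathlib

open Polynomial

private lemma aux_ndeg_pow_sub_X {F : Type*} [Field F] {n : ℕ} (hn : 1 < n) :
    ((X : F[X]) ^ n - X).natDegree = n := by
  have h : ((-X : F[X])).natDegree < ((X : F[X]) ^ n).natDegree := by
    simpa [natDegree_neg, natDegree_X, natDegree_X_pow] using hn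
  rw [sub_eq_add_neg, natDegree_add_eq_left_of_natDegree_lt h, natDegree_X_pow]

private lemma aux_ndeg_P {F : Type*} [Field F] (B : F) {q : ℕ} (hq : 0 < q) :
    ((X : F[X]) ^ (q + 1) - C B * X + C B).natDegree = q + 1 := by
  have h1 : ((X : F[X]) ^ (q + 1) - C B * X + C B) = X ^ (q + 1) + C B * (1 - X) := by ring
  have h2 : ((C B * (1 - X)) : F[X]).natDegree < ((X : F[X]) ^ (q + 1)).natDegree := by
    have h3 : ((1 - X) : F[X]).natDegree ≤ 1 := by
      refine le_trans (natDegree_sub_le _ _) ?_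
      simp [natDegree_one, natDegree_X]
    have h4 := natDegree_C_mul_le B ((1 : F[X]) - X)
    rw [natDegree_X_pow]
    omega
  rw [h1, natDegree_add_eq_left_of_natDegree_lt h2, natDegree_X_pow]

private lemma aux_sep_P {F : Type*} [Field F] {B : F} {q : ℕ} (hB : B ≠ 0)
    (hq0 : (q : F) = 0) :
    (((X : F[X]) ^ (q + 1) - C B * X + C B)).Separable := by
  have hder : derivative ((X : F[X]) ^ (q + 1) - C B * X + C B) = X ^ q - C B := by
    rw [derivative_add, derivative_sub, derivative_X_pow, derivative_C,
        derivative_mul, derivative_C, derivative_X]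
    have hcast : (((q : ℕ) + 1 : ℕ) : F) = 1 := by push_cast [hq0]; ring
    rw [hcast, C_1, one_mul, Nat.add_sub_cancel]
    ring
  have key : C B⁻¹ * ((X : F[X]) ^ (q + 1) - C B * X + C B)
      + (-(C B⁻¹ * X)) * (X ^ q - C B) = 1 := by
    have hCB : (C B⁻¹ : F[X]) * C B = 1 := by rw [← C_mul, inv_mul_cancel₀ hB, C_1]
    calc C B⁻¹ * ((X : F[X]) ^ (q + 1) - C B * X + C B) + (-(C B⁻¹ * X)) * (X ^ q - C B)
        = (C B⁻¹ * C B) * (1 - X + X) := by ring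
      _ = 1 := by rw [hCB]; ring
  exact ⟨C B⁻¹, -(C B⁻¹ * X), by rw [hder]; exact key⟩

private lemma aux_subfield {F : Type*} [Field F] [Fintype F] {p m q k : ℕ}
    [Fact p.Prime] [CharP F p] (hq : q = p ^ m) (hk : 0 < k)
    (hq2 : 2 ≤ q) (hF : Fintype.card F = q ^ k) (hq0 : (q : F) = 0) :
    ∃ S : Finset F, S.card = q ∧ ∀ c : F, c ∈ S ↔ c ^ q = c := by
  classical
  have hqk2 : 2 ≤ q ^ k := le_trans hq2 (Nat.le_self_pow (by omega) q)
  set big : F[X] := X ^ (q ^ k) - X with hbig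
  have hbigdeg : big.natDegree = q ^ k := aux_ndeg_pow_sub_X (by omega)
  have hbigne : big ≠ 0 := by
    intro h; rw [h, natDegree_zero] at hbigdeg; omega
  have hbigsplits : big.Splits := by
    rw [splits_iff_card_roots, hbigdeg]
    refine le_antisymm (le_trans big.card_roots' (le_of_eq hbigdeg)) ?_
    have h1 : (Finset.univ : Finset F) ⊆ big.roots.toFinset := by
      intro t _
      rw [Multiset.mem_toFinset, mem_roots hbigne]
      show big.eval t = 0
      rw [hbig]
      simp only [eval_sub, eval_pow, eval_X]
      rw [← hF, FiniteField.pow_card, sub_self]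
    calc q ^ k = (Finset.univ : Finset F).card := by rw [Finset.card_univ, hF]
      _ ≤ big.roots.toFinset.card := Finset.card_le_card h1
      _ ≤ Multiset.card big.roots := Multiset.toFinset_card_le _
  set small : F[X] := X ^ q - X with hsmall
  have hsmalldeg : small.natDegree = q := aux_ndeg_pow_sub_X (by omega)
  have hsmallne : small ≠ 0 := by intro h; rw [h, natDegree_zero] at hsmalldeg; omega
  have hdvd : ∀ j : ℕ, small ∣ (X ^ (q ^ j) - X : F[X]) := by
    intro j; induction j with
    | zero => simp [pow_zero, pow_one]
    | succ n ih =>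
        have hfp : ((X : F[X]) ^ (q ^ n) - X) ^ q = (X ^ (q ^ n)) ^ q - X ^ q := by
          rw [hq]; exact sub_pow_char_pow _ _ _
        have hstep : (X ^ (q ^ (n + 1)) - X : F[X]) = (X ^ (q ^ n) - X) ^ q + (X ^ q - X) := by
          rw [hfp, ← pow_mul, ← pow_succ]
          ring
        rw [hstep]
        exact dvd_add (dvd_pow ih (by omega)) dvd_rfl
  have hsmallsplits : small.Splits :=
    hbigsplits.of_dvd hbigne (hdvd k)
  have hsep : small.Separable := by
    have hder : derivative small = -1 := by
      rw [hsmall, derivative_sub, derivative_X_pow, derivative_X, hq0, C_0, zero_mul, zero_sub]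
    exact ⟨0, -1, by rw [hder]; ring⟩
  have hnodup : small.roots.Nodup := nodup_roots hsep
  have hcard : Multiset.card small.roots = q := by
    rw [splits_iff_card_roots.mp hsmallsplits, hsmalldeg]
  refine ⟨small.roots.toFinset, ?_, ?_⟩
  · rw [Multiset.toFinset_card_of_nodup hnodup, hcard]
  · intro c
    rw [Multiset.mem_toFinset, mem_roots hsmallne]
    show small.eval c = 0 ↔ _
    rw [hsmall]
    simp only [eval_sub, eval_pow, eval_X]
    exact sub_eq_zero

/-- **Helleseth–Kholosha characterisation of Bluher values** (Theorem 2 of the paper).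
Let `q = p^m` be a prime power and `k ≥ 3`, and let `F` be the field with `q^k` elements.
The set of Bluher values, i.e. of `B ≠ 0` such that `X^(q+1) - B·X + B` splits completely
over `F`, equals `{ (u - u^(q^2))^(q+1) / (u - u^q)^(q^2+1) | u ∈ F, u ∉ F_{q^2} }`,
where `u ∉ F_{q^2}` is expressed as `u^(q^2) ≠ u`. -/
theorem bluher_values_characterisation (p m q k : ℕ) (hp : p.Prime) (hm : 0 < m)
    (hq : q = p ^ m) (hk : 3 ≤ k)
    (F : Type*) [Field F] [Fintype F] (hF : Fintype.card F = q ^ k) :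
    {B : F | B ≠ 0 ∧
        ((X ^ (q + 1) - C B * X + C B : Polynomial F).map (RingHom.id F)).Splits} =
      {B : F | ∃ u : F, u ^ (q ^ 2) ≠ u ∧
        B = (u - u ^ (q ^ 2)) ^ (q + 1) / (u - u ^ q) ^ (q ^ 2 + 1)} := by
  classical
  haveI : Fact p.Prime := ⟨hp⟩
  have hq2 : 2 ≤ q := by rw [hq]; exact Nat.one_lt_pow (by omega) hp.one_lt
  haveI hcharF : CharP F p := by
    haveI := ringChar.charP F
    obtain ⟨n, hrp, hcard⟩ := FiniteField.card F (ringChar F)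
    have h1 : ringChar F ^ (n : ℕ) = p ^ (m * k) := by
      rw [← hcard, hF, hq, ← pow_mul]
    have hdvd : ringChar F ∣ p ^ (m * k) := h1 ▸ dvd_pow_self (ringChar F) n.pos.ne'
    have h2 : ringChar F = p := (Nat.prime_dvd_prime_iff_eq hrp hp).mp (hrp.dvd_of_dvd_pow hdvd)
    exact h2 ▸ ringChar.charP F
  have hq0 : (q : F) = 0 := by
    rw [hq, Nat.cast_pow, CharP.cast_eq_zero F p, zero_pow (by omega)]
  have frobA : ∀ x y : F, (x + y) ^ q = x ^ q + y ^ q := by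
    intro x y; rw [hq]; exact add_pow_char_pow x y p m
  have frobS : ∀ x y : F, (x - y) ^ q = x ^ q - y ^ q := by
    intro x y; rw [hq]; exact sub_pow_char_pow x y m
  have frobN : ∀ x : F, (-x) ^ q = -(x ^ q) := by
    intro x
    have h1 : (-1 : F) ^ q = -1 := by rw [hq]; exact neg_one_pow_char_pow F p m
    calc (-x) ^ q = ((-1 : F)) ^ q * x ^ q := by rw [← mul_pow]; ring_nf
      _ = -(x ^ q) := by rw [h1]; ring
  have hsq : ∀ t : F, t ^ (q ^ 2) = (t ^ q) ^ q := by
    intro t; rw [show q ^ 2 = q * q by ring, pow_mul]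
  ext B
  simp only [Set.mem_setOf_eq]
  constructor
  · rintro ⟨hB0, hsplit⟩
    set P : F[X] := X ^ (q + 1) - C B * X + C B with hPdef
    have hPdeg : P.natDegree = q + 1 := aux_ndeg_P B (by omega)
    have hPne : P ≠ 0 := by intro h; rw [h, natDegree_zero] at hPdeg; omega
    have hsep : P.Separable := by rw [hPdef]; exact aux_sep_P hB0 hq0
    have hnodup : P.roots.Nodup := nodup_roots hsep
    have hcard : Multiset.card P.roots = q + 1 := by
      rw [splits_iff_card_roots.mp (by rwa [Polynomial.map_id] at hsplit), hPdeg]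
    set T : Finset F := P.roots.toFinset with hT
    have hTcard : T.card = q + 1 := by rw [hT, Multiset.toFinset_card_of_nodup hnodup, hcard]
    have hTroot : ∀ t ∈ T, t ^ q * t = B * t - B ∧ t ≠ 0 ∧ t ≠ 1 := by
      intro t ht
      have h2 := (mem_roots hPne).mp (Multiset.mem_toFinset.mp ht)
      rw [Polynomial.IsRoot.def, hPdef] at h2
      have h1 : t ^ (q + 1) - B * t + B = 0 := by simpa using h2
      refine ⟨by linear_combination h1, ?_, ?_⟩
      · rintro rfl
        rw [zero_pow (by omega : q + 1 ≠ 0)] at h1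
        apply hB0
        linear_combination h1
      · rintro rfl
        rw [one_pow] at h1
        have : (1 : F) = 0 := by linear_combination h1
        exact one_ne_zero this
    obtain ⟨x, hxT⟩ := Finset.card_pos.mp (by omega : 0 < T.card)
    obtain ⟨y, hyT, hyx⟩ := Finset.exists_mem_ne (show 1 < T.card by omega) x
    have hy' : y ∈ T.erase x := Finset.mem_erase.mpr ⟨hyx, hyT⟩
    have hzcard : 0 < ((T.erase x).erase y).card := by
      have h1 := Finset.card_erase_of_mem hxT
      have h2 := Finset.card_erase_of_mem hy'
      omega
    obtain ⟨z, hzT'⟩ := Finset.card_pos.mp hzcard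
    have hzy : z ≠ y := (Finset.mem_erase.mp hzT').1
    have hzmem : z ∈ T.erase x := (Finset.mem_erase.mp hzT').2
    have hzx : z ≠ x := (Finset.mem_erase.mp hzmem).1
    have hzT : z ∈ T := (Finset.mem_erase.mp hzmem).2
    obtain ⟨hxe, hx0, hx1⟩ := hTroot x hxT
    obtain ⟨hye, hy0, hy1⟩ := hTroot y hyT
    obtain ⟨hze, hz0, hz1⟩ := hTroot z hzT
    have hxy : x - y ≠ 0 := sub_ne_zero_of_ne (Ne.symm hyx)
    have hxz : x - z ≠ 0 := sub_ne_zero_of_ne (Ne.symm hzx)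
    set u : F := (x - y) / (x - z) with hu
    have hu0 : u ≠ 0 := div_ne_zero hxy hxz
    have Rxy : (x - y) ^ q * (x * y) = B * (x - y) := by
      rw [frobS]; linear_combination y * hxe - x * hye
    have Rxz : (x - z) ^ q * (x * z) = B * (x - z) := by
      rw [frobS]; linear_combination z * hxe - x * hze
    have hC : y * u ^ q = z * u := by
      rw [hu, div_pow]
      rw [show (x - y) ^ q = B * (x - y) / (x * y) by
            field_simp; linear_combination Rxy,
          show (x - z) ^ q = B * (x - z) / (x * z) by
            field_simp; linear_combination Rxz]
      field_simp
    have hCq : y ^ q * u ^ (q ^ 2) = z ^ q * u ^ q := by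
      have h := congrArg (fun t : F => t ^ q) hC
      simp only [mul_pow] at h
      rw [hsq u]
      exact h
    have hbig : (B * ((y - 1) * u ^ (q ^ 2) - (y * u ^ q - u))) * u ^ q = 0 := by
      linear_combination (-(u ^ (q ^ 2) * u ^ q)) * hye + (u ^ q * u) * hze +
        ((z ^ q - B) * u ^ q) * hC + (y * u ^ q) * hCq
    have h3 : (y - 1) * u ^ (q ^ 2) = y * u ^ q - u := by
      rcases mul_eq_zero.mp hbig with h | h
      · rcases mul_eq_zero.mp h with h' | h'
        · exact absurd h' hB0
        · linear_combination h'
      · exact absurd h (pow_ne_zero _ hu0)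
    have hu2 : u ^ (q ^ 2) ≠ u := by
      intro h
      rw [h] at h3
      have h4 : y * u ^ q = y * u := by linear_combination -h3
      have h5 : u ^ q = u := mul_left_cancel₀ hy0 h4
      rw [h5] at hC
      exact hzy (mul_right_cancel₀ hu0 hC).symm
    refine ⟨u, hu2, ?_⟩
    have huq : u ^ q ≠ u := by
      intro h; apply hu2; rw [hsq, h, h]
    set a : F := u ^ q - u with ha
    have ha0 : a ≠ 0 := sub_ne_zero_of_ne huq
    have haqv : a ^ q = u ^ (q ^ 2) - u ^ q := by rw [ha, frobS, ← hsq]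
    have h5 : (y - 1) * a ^ q = a := by rw [haqv, ha]; linear_combination h3
    have h6 : y * a ^ q = a + a ^ q := by linear_combination h5
    have h7 : y ^ q * (a ^ q) ^ q = a ^ q + (a ^ q) ^ q := by
      have h := congrArg (fun t : F => t ^ q) h6
      simp only [mul_pow] at h
      rw [frobA] at h
      exact h
    have haq0 : a ^ q ≠ 0 := pow_ne_zero _ ha0
    have haqq0 : (a ^ q) ^ q ≠ 0 := pow_ne_zero _ haq0
    have hnum : u - u ^ (q ^ 2) = -(a + a ^ q) := by rw [haqv, ha]; ring
    have hden : u - u ^ q = -a := by rw [ha]; ring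
    rw [hnum, hden]
    have e1 : (-(a + a ^ q)) ^ (q + 1) = (a ^ q + (a ^ q) ^ q) * (a + a ^ q) := by
      rw [pow_succ, frobN (a + a ^ q), frobA a (a ^ q)]
      ring
    have e2 : (-a) ^ (q ^ 2 + 1) = (a ^ q) ^ q * a := by
      rw [pow_succ, hsq, frobN a, frobN (a ^ q)]
      ring
    rw [e1, e2, eq_div_iff (mul_ne_zero haqq0 ha0)]
    linear_combination (y * a ^ q) * h7 + (a ^ q + (a ^ q) ^ q) * h6 -
      (a ^ q * (a ^ q) ^ q) * hye - (B * (a ^ q) ^ q) * h5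
  · rintro ⟨u, hu2, rfl⟩
    have huq : u ^ q ≠ u := fun h => hu2 (by rw [hsq, h, h])
    set a : F := u ^ q - u with ha
    set b : F := u ^ (q ^ 2) - u with hb
    have ha0 : a ≠ 0 := sub_ne_zero_of_ne huq
    have hb0 : b ≠ 0 := sub_ne_zero_of_ne hu2
    have haqv : a ^ q = u ^ (q ^ 2) - u ^ q := by rw [ha, frobS, ← hsq]
    set B : F := (u - u ^ (q ^ 2)) ^ (q + 1) / (u - u ^ q) ^ (q ^ 2 + 1) with hBdef
    have hnum : u - u ^ (q ^ 2) = -b := by rw [hb]; ring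
    have hden : u - u ^ q = -a := by rw [ha]; ring
    have hd : (u - u ^ q) ^ (q ^ 2 + 1) = (a ^ q) ^ q * a := by
      rw [hden, pow_succ, hsq, frobN a, frobN (a ^ q)]; ring
    have hn : (u - u ^ (q ^ 2)) ^ (q + 1) = b ^ q * b := by
      rw [hnum, pow_succ, frobN b]; ring
    have hd0 : (u - u ^ q) ^ (q ^ 2 + 1) ≠ 0 := by
      rw [hd]; exact mul_ne_zero (pow_ne_zero _ (pow_ne_zero _ ha0)) ha0
    have hBalt : B * ((a ^ q) ^ q * a) = b ^ q * b := by
      rw [hBdef, ← hd, ← hn, div_mul_cancel₀ _ hd0]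
    have hB0 : B ≠ 0 := by
      rw [hBdef]
      apply div_ne_zero
      · apply pow_ne_zero; rw [hnum]; exact neg_ne_zero.mpr hb0
      · exact hd0
    refine ⟨hB0, ?_⟩
    obtain ⟨S, hScard, hSmem⟩ := aux_subfield hq (by omega) hq2 hF hq0
    set P : F[X] := X ^ (q + 1) - C B * X + C B with hPdef
    have hPdeg : P.natDegree = q + 1 := aux_ndeg_P B (by omega)
    have hPne : P ≠ 0 := by intro h; rw [h, natDegree_zero] at hPdeg; omega
    set G : Finset F := insert 1 (S.image (fun c => u + c)) with hG
    have h1G : (1 : F) ∉ S.image (fun c => u + c) := by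
      intro h1
      obtain ⟨c, hc, hc1⟩ := Finset.mem_image.mp h1
      apply huq
      have hcq := (hSmem c).mp hc
      have hu1 : u = 1 - c := by linear_combination hc1
      rw [hu1, frobS, one_pow, hcq]
    have hGcard : G.card = q + 1 := by
      rw [hG, Finset.card_insert_of_notMem h1G,
        Finset.card_image_of_injective _ (add_right_injective u), hScard]
    have hgfacts : ∀ g ∈ G, g ≠ 0 ∧ a * (g ^ q) ^ q = b * g ^ q - a ^ q * g := by
      intro g hg
      rcases Finset.mem_insert.mp hg with rfl | hg'
      · refine ⟨one_ne_zero, ?_⟩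
        simp only [one_pow, mul_one]
        rw [haqv, ha, hb]
        rw [hsq]
        ring
      · obtain ⟨c, hc, rfl⟩ := Finset.mem_image.mp hg'
        have hcq : c ^ q = c := (hSmem c).mp hc
        have hgq : (u + c) ^ q = u ^ q + c := by rw [frobA, hcq]
        have hgqq : (u ^ q + c) ^ q = (u ^ q) ^ q + c := by rw [frobA, hcq]
        constructor
        · intro h0
          apply huq
          have hneg : u = -c := by linear_combination h0
          rw [hneg, frobN, hcq]
        · rw [hgq, hgqq, haqv, ha, hb, hsq]
          ring
    have hroot : ∀ g ∈ G, b * g ^ q / (a ^ q * g) ∈ P.roots.toFinset := by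
      intro g hg
      obtain ⟨hg0, hgid⟩ := hgfacts g hg
      have haq0 : a ^ q ≠ 0 := pow_ne_zero _ ha0
      have hag0 : a ^ q * g ≠ 0 := mul_ne_zero haq0 hg0
      set yv : F := b * g ^ q / (a ^ q * g) with hyv
      have R1 : yv * (a ^ q * g) = b * g ^ q := div_mul_cancel₀ _ hag0
      have R2 : yv ^ q * ((a ^ q) ^ q * g ^ q) = b ^ q * (g ^ q) ^ q := by
        have h := congrArg (fun t : F => t ^ q) R1
        simpa only [mul_pow] using h
      have hM : (yv ^ (q + 1) - B * yv + B) * ((a ^ q) ^ q * a ^ q * a * g * g ^ q) = 0 := by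
        rw [pow_succ]
        linear_combination (a * b ^ q * (g ^ q) ^ q - B * (a ^ q) ^ q * a * g ^ q) * R1 +
          (a * yv * (a ^ q * g)) * R2 + (a ^ q * g * g ^ q - b * (g ^ q) ^ 2) * hBalt +
          (b ^ q * b * g ^ q) * hgid
      have hMne : ((a ^ q) ^ q * a ^ q * a * g * g ^ q) ≠ 0 :=
        mul_ne_zero (mul_ne_zero (mul_ne_zero (mul_ne_zero (pow_ne_zero _ haq0) haq0) ha0) hg0)
          (pow_ne_zero _ hg0)
      rw [Multiset.mem_toFinset, mem_roots hPne, Polynomial.IsRoot.def, hPdef]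
      have heval : ((X : F[X]) ^ (q + 1) - C B * X + C B).eval yv
          = yv ^ (q + 1) - B * yv + B := by simp
      rw [heval]
      exact (mul_eq_zero.mp hM).resolve_right hMne
    have hinj : Set.InjOn (fun g => b * g ^ q / (a ^ q * g)) ↑G := by
      intro g hg h hh heq
      obtain ⟨hg0, _⟩ := hgfacts g (Finset.mem_coe.mp hg)
      obtain ⟨hh0, _⟩ := hgfacts h (Finset.mem_coe.mp hh)
      have haq0 : a ^ q ≠ 0 := pow_ne_zero _ ha0
      have hag0 : a ^ q * g ≠ 0 := mul_ne_zero haq0 hg0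
      have hah0 : a ^ q * h ≠ 0 := mul_ne_zero haq0 hh0
      simp only at heq
      rw [div_eq_div_iff hag0 hah0] at heq
      have hcross : g ^ q * h = h ^ q * g := by
        have h2 : (b * a ^ q) * (g ^ q * h) = (b * a ^ q) * (h ^ q * g) := by
          linear_combination heq
        exact mul_left_cancel₀ (mul_ne_zero hb0 haq0) h2
      rcases Finset.mem_insert.mp (Finset.mem_coe.mp hg) with rfl | hg'
      · rcases Finset.mem_insert.mp (Finset.mem_coe.mp hh) with rfl | hh'
        · rfl
        · obtain ⟨c, hc, rfl⟩ := Finset.mem_image.mp hh'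
          exfalso
          apply huq
          have hcq := (hSmem c).mp hc
          have hgq : (u + c) ^ q = u ^ q + c := by rw [frobA, hcq]
          rw [one_pow, one_mul, hgq, mul_one] at hcross
          linear_combination -hcross
      · obtain ⟨c, hc, rfl⟩ := Finset.mem_image.mp hg'
        have hcq := (hSmem c).mp hc
        have hgq : (u + c) ^ q = u ^ q + c := by rw [frobA, hcq]
        rcases Finset.mem_insert.mp (Finset.mem_coe.mp hh) with rfl | hh'
        · exfalso
          apply huq
          rw [one_pow, mul_one, hgq, one_mul] at hcross
          linear_combination hcross
        · obtain ⟨c', hc', rfl⟩ := Finset.mem_image.mp hh'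
          have hc'q := (hSmem c').mp hc'
          have hhq : (u + c') ^ q = u ^ q + c' := by rw [frobA, hc'q]
          rw [hgq, hhq] at hcross
          by_cases hcc : c = c'
          · rw [hcc]
          · exfalso
            apply huq
            have h9 : (c' - c) * u ^ q = (c' - c) * u := by linear_combination hcross
            exact mul_left_cancel₀ (sub_ne_zero_of_ne (Ne.symm hcc)) h9
    rw [Polynomial.map_id, splits_iff_card_roots]
    have hcard1 : Multiset.card P.roots ≤ q + 1 := le_trans P.card_roots' (le_of_eq hPdeg)
    have hsub : G.image (fun g => b * g ^ q / (a ^ q * g)) ⊆ P.roots.toFinset := by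
      intro t ht
      obtain ⟨g, hg, rfl⟩ := Finset.mem_image.mp ht
      exact hroot g hg
    have hcard2 : q + 1 ≤ Multiset.card P.roots := by
      calc q + 1 = G.card := hGcard.symm
        _ = (G.image (fun g => b * g ^ q / (a ^ q * g))).card :=
            (Finset.card_image_of_injOn hinj).symm
        _ ≤ P.roots.toFinset.card := Finset.card_le_card hsub
        _ ≤ Multiset.card P.roots := Multiset.toFinset_card_le _
    rw [hPdeg]
    omega
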